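/- arXiv:1404.5244 — 10 statements merged into one kernel-verified Lean document; each statement's English description precedes it below -/
import Mathlib

section
/- Let w be a nonempty palindrome and let p be a period of w with 1 ≤ p ≤ |w|. Then there exist palindromes u and v such that v ≠ ε, |u| + |v| = p, and w = (uv)^k u for some integer k ≥ 1. -/
/-- `w = z^k`: concatenation of `k` copies of `z`. -/
def listPow {α : Type*} (z : List α) (k : ℕ) : List α := (List.replicate k z).flatten

/-- A positive integer `p` is a period of `w` if `w[i] = w[i+p]` whenever both positions
are inside `w` (0-indexed). -/
def HasPeriod {α : Type*} (w : List α) (p : ℕ) : Prop :=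
  0 < p ∧ ∀ i : ℕ, i + p < w.length → w[i]? = w[i + p]?

lemma listPow_succ {α : Type*} (z : List α) (k : ℕ) :
    listPow z (k + 1) = z ++ listPow z k := by
  simp [listPow, List.replicate_succ]

lemma listPow_succ' {α : Type*} (z : List α) (k : ℕ) :
    listPow z (k + 1) = listPow z k ++ z := by
  induction k with
  | zero => simp [listPow]
  | succ n ih => rw [listPow_succ z (n + 1), ih, ← List.append_assoc, ← listPow_succ, ih]

lemma listPow_length {α : Type*} (z : List α) (k : ℕ) :
    (listPow z k).length = k * z.length := by
  induction k with
  | zero => simp [listPow]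
  | succ n ih => rw [listPow_succ]; simp [ih]; ring

lemma drop_eq_take {α : Type*} (w : List α) (p : ℕ) (hper : HasPeriod w p) :
    w.drop p = w.take (w.length - p) := by
  apply List.ext_getElem?
  intro i
  rw [List.getElem?_drop, List.getElem?_take]
  split
  · rw [Nat.add_comm p i]
    exact (hper.2 i (by omega)).symm
  · rename_i h
    apply List.getElem?_eq_none
    omega

lemma take_period {α : Type*} (w : List α) (p m : ℕ) (hper : HasPeriod w p) :
    HasPeriod (w.take m) p := by
  refine ⟨hper.1, fun i hi => ?_⟩
  simp only [List.length_take] at hi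
  rw [List.getElem?_take, List.getElem?_take, if_pos (by omega), if_pos (by omega)]
  exact hper.2 i (by omega)

lemma key {α : Type*} (w : List α) (p : ℕ) (hper : HasPeriod w p) (hple : p ≤ w.length) :
    w = listPow (w.take p) (w.length / p) ++ w.take (w.length % p) := by
  have hp := hper.1
  by_cases h2 : 2 * p ≤ w.length
  · -- inductive step via strong recursion on length
    have hlt : w.length - p < w.length := by omega
    have ht : w.drop p = w.take (w.length - p) := drop_eq_take w p hper
    have hper' := take_period w p (w.length - p) hper
    have hlen' : (w.take (w.length - p)).length = w.length - p := by
      simp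
    have ih := key (w.take (w.length - p)) p hper' (by rw [hlen']; omega)
    rw [hlen'] at ih
    have htt : ∀ m, m ≤ w.length - p → (w.take (w.length - p)).take m = w.take m := by
      intro m hm
      rw [List.take_take, min_eq_left hm]
    rw [htt p (by omega), htt ((w.length - p) % p) (by
        have := Nat.mod_lt (w.length - p) hp; omega)] at ih
    have hmod : (w.length - p) % p = w.length % p := by
      conv_rhs => rw [show w.length = (w.length - p) + 1 * p by omega]
      rw [Nat.add_mul_mod_self_right]
    have hdiv : w.length / p = (w.length - p) / p + 1 := by
      conv_lhs => rw [show w.length = (w.length - p) + 1 * p by omega]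
      rw [Nat.add_mul_div_right _ _ hp]
    rw [hdiv, listPow_succ, List.append_assoc]
    conv_lhs => rw [← List.take_append_drop p w, ht, ih, hmod]
  · -- base case: p ≤ |w| < 2p
    have hdiv : w.length / p = 1 := Nat.div_eq_of_lt_le (by omega) (by omega)
    have hmod : w.length % p = w.length - p := by
      rw [Nat.mod_eq_sub_mod hple, Nat.mod_eq_of_lt (by omega)]
    rw [hdiv, hmod]
    show w = listPow (w.take p) (0 + 1) ++ _
    rw [listPow_succ]
    have : listPow (w.take p) 0 = [] := rfl
    rw [this, List.append_nil]
    conv_lhs => rw [← List.take_append_drop p w, drop_eq_take w p hper]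
termination_by w.length

/-- If `w` is a nonempty palindrome and `p` is a period of `w` with `1 ≤ p ≤ |w|`, then there
are palindromes `u`, `v` with `v ≠ ε`, `|u| + |v| = p` and `w = (uv)^k u` for some `k ≥ 1`. -/
theorem stmt_0 {α : Type*} (w : List α) (hne : w ≠ []) (hpal : w.reverse = w)
    (p : ℕ) (hper : HasPeriod w p) (hple : p ≤ w.length) :
    ∃ u v : List α, u.reverse = u ∧ v.reverse = v ∧ v ≠ [] ∧
      u.length + v.length = p ∧ ∃ k : ℕ, 1 ≤ k ∧ w = listPow (u ++ v) k ++ u := by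
  have hp := hper.1
  have hkey := key w p hper hple
  obtain ⟨k, hkdef⟩ : ∃ k, w.length / p = k := ⟨_, rfl⟩
  obtain ⟨r, hrdef⟩ : ∃ r, w.length % p = r := ⟨_, rfl⟩
  rw [hkdef, hrdef] at hkey
  have hrp : r < p := hrdef ▸ Nat.mod_lt _ hp
  have hk1 : 1 ≤ k := hkdef ▸ (Nat.one_le_div_iff hp).2 hple
  have hkpr : k * p + r = w.length := by
    rw [← hkdef, ← hrdef, Nat.mul_comm]; exact Nat.div_add_mod _ p
  set u : List α := w.take r with hudef
  set v : List α := (w.take p).drop r with hvdef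
  have huv : u ++ v = w.take p := by
    show w.take r ++ (w.take p).drop r = w.take p
    rw [show w.take r = (w.take p).take r by rw [List.take_take, min_eq_left hrp.le]]
    exact List.take_append_drop r (w.take p)
  have hul : u.length = r := by
    rw [hudef, List.length_take, min_eq_left]
    omega
  have hvl : v.length = p - r := by
    rw [hvdef, List.length_drop, List.length_take, min_eq_left hple]
  have hplen : ∀ m, (listPow (u ++ v) m).length = m * p := by
    intro m
    rw [listPow_length, List.length_append, hul, hvl]
    congr 1; omega
  rw [← huv] at hkey
  have hw : w = listPow (u ++ v) k ++ u := hkey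
  -- u is a palindrome
  have hu : u.reverse = u := by
    have h1 : u.reverse = w.drop (w.length - r) := by
      rw [hudef, List.reverse_take, hpal]
    rw [h1, show w.length - r = (listPow (u ++ v) k).length by rw [hplen]; omega]
    conv_lhs => rw [hw]
    exact List.drop_left
  -- the suffix of length p of w is v ++ u
  have hsuf : w.drop (w.length - p) = v ++ u := by
    obtain ⟨k', rfl⟩ : ∃ k', k = k' + 1 := ⟨k - 1, by omega⟩
    have h5 : (listPow (u ++ v) k').length = k' * p := hplen k'
    have h6 : k' * p + p + r = w.length := by
      rw [show k' * p + p = (k' + 1) * p by ring]; exact hkpr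
    rw [show w.length - p = (listPow (u ++ v) k').length + r by rw [h5]; omega]
    conv_lhs => rw [hw, listPow_succ', List.append_assoc, List.append_assoc]
    rw [← List.drop_drop, List.drop_left, ← hul, List.drop_left]
  have hv : v.reverse = v := by
    have h1 : (u ++ v).reverse = v ++ u := by
      rw [huv, List.reverse_take, hpal, hsuf]
    rw [List.reverse_append, hu] at h1
    exact List.append_cancel_right h1
  refine ⟨u, v, hu, hv, ?_, by omega, k, hk1, hw⟩
  intro hveq
  rw [hveq, List.length_nil] at hvl
  omega
end

section
/- Let w be a palindrome and let u be a proper suffix of w (i.e. u is a suffix of w with |u| < |w|) that is itself a palindrome. Then the number |w| − |u| is a period of w. -/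
/-- If `w` is a palindrome and `u` is a proper suffix of `w` that is a palindrome,
then `|w| - |u|` is a period of `w`. -/
theorem stmt_1 {α : Type*} (w u : List α) (hw : w.reverse = w) (hu : u.reverse = u)
    (hsuf : u <:+ w) (hlt : u.length < w.length) :
    HasPeriod w (w.length - u.length) := by
  have hpre : u <+: w := by
    have := hsuf.reverse
    rwa [hw, hu] at this
  obtain ⟨s, hs⟩ := hpre
  obtain ⟨t, ht⟩ := hsuf
  have hp : w.length - u.length = t.length := by
    have := congrArg List.length ht
    simp at this
    omega
  constructor
  · omega
  · intro i hi
    rw [hp] at hi ⊢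
    have hiu : i < u.length := by
      have := congrArg List.length ht
      simp at this
      omega
    have h1 : w[i]? = u[i]? := by
      rw [← hs, List.getElem?_append, if_pos hiu]
    have h2 : w[i + t.length]? = u[i]? := by
      rw [← ht]
      rw [Nat.add_comm, List.getElem?_append_right (by omega)]
      simp
    rw [h1, h2]
end

section
/- Let w be a palindrome and let u be a proper prefix of w (i.e. u is a prefix of w with |u| < |w|) that is itself a palindrome. Then the number |w| − |u| is a period of w. -/
/-- If `w` is a palindrome and `u` is a proper prefix of `w` that is a palindrome,
then `|w| - |u|` is a period of `w`. -/
theorem stmt_2 {α : Type*} (w u : List α) (hw : w.reverse = w) (hu : u.reverse = u)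
    (hpre : u <+: w) (hlt : u.length < w.length) :
    HasPeriod w (w.length - u.length) := by
  have hsuf : u <:+ w := by
    rw [← hu, ← hw]
    exact List.reverse_suffix.mpr hpre
  obtain ⟨s, hs⟩ := hpre
  obtain ⟨t, ht⟩ := hsuf
  have hts : t.length = w.length - u.length := by
    have := congrArg List.length ht
    simp at this
    omega
  refine ⟨by omega, fun i hi => ?_⟩
  have him : i < u.length := by omega
  have h1 : w[i]? = u[i]? := by
    rw [← hs, List.getElem?_append_left him]
  have h2 : w[i + (w.length - u.length)]? = u[i]? := by
    conv_lhs => rw [← ht]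
    simp only [List.length_append, Nat.add_sub_cancel]
    rw [List.getElem?_append_right (by omega)]
    congr 1
    omega
  rw [h1, h2]
end

section
/- Let w be a string admitting two distinct decompositions into two palindromes: w = u₁v₁ = u₂v₂ where u₁, v₁, u₂, v₂ are palindromes, v₁ ≠ ε, v₂ ≠ ε, and |u₁| < |u₂|. Then w is not primitive, i.e. there exist a string z and an integer k ≥ 2 with w = z^k. -/
lemma listPow_one {α : Type*} (z : List α) : listPow z 1 = z := by simp [listPow]

lemma listPow_add {α : Type*} (z : List α) (k l : ℕ) :
    listPow z (k + l) = listPow z k ++ listPow z l := by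
  unfold listPow
  rw [List.replicate_add, List.flatten_append]

/-- Commuting words are powers of a common word. -/
lemma comm_pow {α : Type*} : ∀ N (x y : List α), x.length + y.length ≤ N → x ++ y = y ++ x →
    ∃ z k l, (x ≠ [] → 1 ≤ k) ∧ (y ≠ [] → 1 ≤ l) ∧ x = listPow z k ∧ y = listPow z l := by
  intro N
  induction N with
  | zero =>
    intro x y hle _
    have hx : x = [] := List.eq_nil_of_length_eq_zero (by omega)
    have hy : y = [] := List.eq_nil_of_length_eq_zero (by omega)
    subst hx; subst hy
    exact ⟨[], 1, 1, fun _ => le_refl _, fun _ => le_refl _, by simp [listPow], by simp [listPow]⟩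
  | succ N IH =>
    intro x y hle h
    rcases eq_or_ne x [] with rfl | hx
    · exact ⟨y, 0, 1, by simp, fun _ => le_refl _, rfl, (listPow_one y).symm⟩
    rcases eq_or_ne y [] with rfl | hy
    · exact ⟨x, 1, 0, fun _ => le_refl _, by simp, (listPow_one x).symm, rfl⟩
    rcases le_total x.length y.length with hl | hl
    · -- x is a prefix of y
      have hxt : x = y.take x.length := by
        have := congrArg (List.take x.length) h
        rwa [List.take_left, List.take_append_of_le_length hl] at this
      have hy2 : y = x ++ y.drop x.length := by
        conv_lhs => rw [← List.take_append_drop x.length y]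
        rw [← hxt]
      have h' : x ++ y.drop x.length = y.drop x.length ++ x := by
        have h2 : x ++ (x ++ y.drop x.length) = (x ++ y.drop x.length) ++ x := by
          rw [← hy2]; exact h
        rw [List.append_assoc] at h2
        exact List.append_cancel_left h2
      have hlen' : x.length + (y.drop x.length).length ≤ N := by
        have hx0 : 0 < x.length := List.length_pos_iff.mpr hx
        have hdl : (y.drop x.length).length = y.length - x.length := List.length_drop
        omega
      obtain ⟨z, k, l, hk, _, hx', ht'⟩ := IH x (y.drop x.length) hlen' h'
      refine ⟨z, k, k + l, hk, fun _ => ?_, hx', by rw [hy2, listPow_add, ← hx', ← ht']⟩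
      have := hk hx; omega
    · -- y is a prefix of x
      have hyx : y = x.take y.length := by
        have := congrArg (List.take y.length) h
        rw [List.take_append_of_le_length hl, List.take_left] at this
        exact this.symm
      have hx2 : x = y ++ x.drop y.length := by
        conv_lhs => rw [← List.take_append_drop y.length x]
        rw [← hyx]
      have h' : x.drop y.length ++ y = y ++ x.drop y.length := by
        have h2 : (y ++ x.drop y.length) ++ y = y ++ (y ++ x.drop y.length) := by
          rw [← hx2]; exact h
        rw [List.append_assoc] at h2
        exact List.append_cancel_left h2
      have hlen' : (x.drop y.length).length + y.length ≤ N := by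
        have hy0 : 0 < y.length := List.length_pos_iff.mpr hy
        have hdl : (x.drop y.length).length = x.length - y.length := List.length_drop
        omega
      obtain ⟨z, k, l, _, hl', hs', hy'⟩ := IH (x.drop y.length) y hlen' h'
      refine ⟨z, l + k, l, fun _ => ?_, hl', by rw [hx2, listPow_add, ← hs', ← hy'], hy'⟩
      have := hl' hy; omega

/-- A string admitting two distinct decompositions into two palindromes is not primitive. -/
theorem stmt_5 {α : Type*} (w u₁ v₁ u₂ v₂ : List α)
    (hu₁ : u₁.reverse = u₁) (hv₁ : v₁.reverse = v₁) (hv₁ne : v₁ ≠ [])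
    (hu₂ : u₂.reverse = u₂) (hv₂ : v₂.reverse = v₂) (hv₂ne : v₂ ≠ [])
    (h1 : w = u₁ ++ v₁) (h2 : w = u₂ ++ v₂) (hlen : u₁.length < u₂.length) :
    ∃ (z : List α) (k : ℕ), 2 ≤ k ∧ w = listPow z k := by
  have hrev1 : w.reverse = v₁ ++ u₁ := by rw [h1, List.reverse_append, hv₁, hu₁]
  have hrev2 : w.reverse = v₂ ++ u₂ := by rw [h2, List.reverse_append, hv₂, hu₂]
  have hr1 : w.rotate u₁.length = v₁ ++ u₁ := by
    conv_lhs => rw [h1]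
    exact List.rotate_append_length_eq _ _
  have hr2 : w.rotate u₂.length = v₂ ++ u₂ := by
    conv_lhs => rw [h2]
    exact List.rotate_append_length_eq _ _
  have heq : w.rotate u₁.length = w.rotate u₂.length := by
    rw [hr1, hr2, ← hrev1, ← hrev2]
  have hwl1 : w.length = u₁.length + v₁.length := by rw [h1, List.length_append]
  have hwl2 : w.length = u₂.length + v₂.length := by rw [h2, List.length_append]
  have hv₁pos : 0 < v₁.length := List.length_pos_iff.mpr hv₁ne
  have hv₂pos : 0 < v₂.length := List.length_pos_iff.mpr hv₂ne
  set q := u₁.length + (w.length - u₂.length) with hqdef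
  have hn : u₂.length ≤ w.length := by omega
  have hq : w.rotate q = w := by
    have h3 := congrArg (fun l => List.rotate l (w.length - u₂.length)) heq
    simp only [List.rotate_rotate] at h3
    rwa [Nat.add_sub_cancel' hn, List.rotate_length] at h3
  have hq1 : 0 < q := by omega
  have hq2 : q < w.length := by omega
  have hrot : w.rotate q = w.drop q ++ w.take q := List.rotate_eq_drop_append_take hq2.le
  have hw1 : w = w.take q ++ w.drop q := (List.take_append_drop _ _).symm
  have hw2 : w = w.drop q ++ w.take q := hq.symm.trans hrot
  have hcomm : w.take q ++ w.drop q = w.drop q ++ w.take q := hw1.symm.trans hw2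
  obtain ⟨z, k, l, hk, hl, hz1, hz2⟩ :=
    comm_pow ((w.take q).length + (w.drop q).length) (w.take q) (w.drop q) le_rfl hcomm
  have htne : w.take q ≠ [] := by
    apply List.length_pos_iff.mp
    rw [List.length_take]; omega
  have hdne : w.drop q ≠ [] := by
    apply List.length_pos_iff.mp
    rw [List.length_drop]; omega
  refine ⟨z, k + l, ?_, by rw [hw1, hz1, hz2, ← listPow_add]⟩
  have := hk htne; have := hl hdne; omega
end

section
/- Let w be a nonempty palindrome with minimal period p and canonical decomposition w = (xy)^k x (so x, y are palindromes, y ≠ ε, |x| + |y| = p, k ≥ 1). Let w[i..j] be an occurrence of a palindrome in w (1 ≤ i, i − 1 ≤ j ≤ |w|) with j − i + 1 ≥ p − 1. Then the center of w[i..j] coincides with the center of one of the occurrences of x or y in the decomposition; equivalently, i + j ≡ |x| + 1 (mod p). -/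
/-- The substring `w[i..j]` (1-indexed, `w[i..i-1] = ε`). -/
def substr {α : Type*} (w : List α) (i j : ℕ) : List α := (w.drop (i - 1)).take (j + 1 - i)

/-- If `w` is a nonempty palindrome with minimal period `p` and canonical decomposition
`(xy)^k x`, then every subpalindrome occurrence `w[i..j]` of length at least `p - 1`
has its center at the center of an occurrence of `x` or `y`, i.e. `i + j ≡ |x| + 1 (mod p)`. -/
theorem stmt_7 {α : Type*} (w x y : List α) (p k : ℕ)
    (hne : w ≠ []) (hpal : w.reverse = w)
    (hper : HasPeriod w p) (hmin : ∀ q, HasPeriod w q → p ≤ q)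
    (hx : x.reverse = x) (hy : y.reverse = y) (hyne : y ≠ [])
    (hxy : x.length + y.length = p) (hk : 1 ≤ k) (hdec : w = listPow (x ++ y) k ++ x)
    (i j : ℕ) (hi : 1 ≤ i) (hij : i ≤ j + 1) (hj : j ≤ w.length)
    (hlong : p + i ≤ j + 2)
    (hsubpal : (substr w i j).reverse = substr w i j) :
    (i + j) % p = (x.length + 1) % p := by
  obtain ⟨hp0, hperiod⟩ := hper
  -- dispatch the trivial case p = 1
  rcases Nat.lt_or_ge p 2 with hp1 | hp2
  · interval_cases p
    omega
  set n := w.length with hnw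
  have hji : i ≤ j := by omega
  have hn : n = k * p + x.length := by
    rw [hnw, hdec, ← hxy]
    simp [listPow, mul_comm]
  have hpn : p ≤ n := by nlinarith
  -- period extended: value depends only on index mod p
  have A : ∀ m : ℕ, m < n → w[m]? = w[m % p]? := by
    intro m
    induction m using Nat.strong_induction_on with
    | _ m ih =>
      intro hm
      by_cases h : m < p
      · rw [Nat.mod_eq_of_lt h]
      · push_neg at h
        have h2 := hperiod (m - p) (by omega)
        rw [show m - p + p = m from by omega] at h2
        rw [← h2, ih (m - p) (by omega) (by omega), Nat.mod_eq_sub_mod h]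
  -- palindromicity of w, pointwise
  have B : ∀ t : ℕ, t < n → w[t]? = w[n - 1 - t]? := by
    intro t ht
    conv_lhs => rw [← hpal]
    exact List.getElem?_reverse ht
  -- palindromicity of the substring, pointwise
  have hL : (substr w i j).length = j + 1 - i := by
    simp [substr]
    omega
  have C : ∀ t : ℕ, t ≤ j - i → w[i - 1 + t]? = w[j - 1 - t]? := by
    intro t ht
    have htL : t < (substr w i j).length := by omega
    have h1 : (substr w i j)[t]? = w[i - 1 + t]? := by
      rw [substr, List.getElem?_take_of_lt (by omega), List.getElem?_drop]
    have h2 : (substr w i j)[t]? = w[j - 1 - t]? := by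
      conv_lhs => rw [← hsubpal]
      rw [List.getElem?_reverse (by simpa using htL), hL, substr,
        List.getElem?_take_of_lt (by omega), List.getElem?_drop]
      congr 1
      omega
    rw [← h1, h2]
  -- the bi-infinite periodic extension
  set f : ℤ → Option α := fun m => w[(m % (p : ℤ)).toNat]? with hf
  have hpz : (0 : ℤ) < (p : ℤ) := by exact_mod_cast hp0
  have hfc : ∀ a b : ℤ, (p : ℤ) ∣ b - a → f a = f b := by
    intro a b hab
    have : a % (p : ℤ) = b % (p : ℤ) := (Int.modEq_iff_dvd.mpr hab : Int.ModEq _ a b)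
    simp only [hf, this]
  have hfn : ∀ m : ℕ, m < n → f m = w[m]? := by
    intro m hm
    have h1 : ((m : ℤ)) % (p : ℤ) = ((m % p : ℕ) : ℤ) := by push_cast; rfl
    simp only [hf, h1, Int.toNat_natCast]
    exact (A m hm).symm
  have key : ∀ a : ℤ, 0 ≤ a % (p : ℤ) ∧ a % (p : ℤ) < p ∧
      (p : ℤ) ∣ (a % (p : ℤ)) - a := by
    intro a
    exact ⟨Int.emod_nonneg a (by omega), Int.emod_lt_of_pos a hpz,
      ⟨-(a / p), by have := Int.mul_ediv_add_emod a p; linarith⟩⟩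
  -- reflection about the center of w
  have S1 : ∀ a : ℤ, f a = f ((n : ℤ) - 1 - a) := by
    intro a
    obtain ⟨k1, k2, k3⟩ := key a
    set a' : ℕ := (a % (p : ℤ)).toNat with ha'
    have hc : ((a' : ℕ) : ℤ) = a % (p : ℤ) := Int.toNat_of_nonneg k1
    have ha'p : a' < p := by omega
    have e1 : f a = f a' := hfc a a' (by rw [hc]; exact k3)
    have e2 : f ((n : ℤ) - 1 - a) = f ((n : ℕ) - 1 - a' : ℕ) := by
      apply hfc
      have : (((n : ℕ) - 1 - a' : ℕ) : ℤ) = (n : ℤ) - 1 - (a' : ℤ) := by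
        push_cast [Nat.cast_sub (by omega : a' ≤ n - 1), Nat.cast_sub (by omega : 1 ≤ n)]
        ring
      rw [this, hc]
      obtain ⟨t, ht⟩ := k3
      exact ⟨-t, by linarith⟩
    rw [e1, e2, hfn a' (by omega), hfn (n - 1 - a') (by omega)]
    exact B a' (by omega)
  -- reflection about the center of the subpalindrome
  have S2 : ∀ a : ℤ, f a = f ((i : ℤ) + (j : ℤ) - 2 - a) := by
    intro a
    obtain ⟨k1, k2, k3⟩ := key (a - ((i : ℤ) - 1))
    set a' : ℕ := ((a - ((i : ℤ) - 1)) % (p : ℤ)).toNat with ha'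
    have hc : ((a' : ℕ) : ℤ) = (a - ((i : ℤ) - 1)) % (p : ℤ) := Int.toNat_of_nonneg k1
    have ha'p : a' < p := by omega
    have hdvd : (p : ℤ) ∣ ((i : ℤ) - 1 + a') - a := by
      obtain ⟨t, ht⟩ := k3
      exact ⟨t, by rw [hc] at *; linarith⟩
    by_cases hcase : a' ≤ j - i
    · have e1 : f a = f ((i - 1 + a' : ℕ)) := by
        apply hfc
        obtain ⟨t, ht⟩ := hdvd
        exact ⟨t, by push_cast [Nat.cast_sub hi]; linarith⟩
      have e2 : f ((i : ℤ) + (j : ℤ) - 2 - a) = f ((j - 1 - a' : ℕ)) := by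
        apply hfc
        have hcc : ((j - 1 - a' : ℕ) : ℤ) = (j : ℤ) - 1 - a' := by
          push_cast [Nat.cast_sub (by omega : a' ≤ j - 1), Nat.cast_sub (by omega : 1 ≤ j)]
          ring
        rw [hcc]
        obtain ⟨t, ht⟩ := hdvd
        exact ⟨-t, by linarith⟩
      rw [e1, e2, hfn _ (by omega), hfn _ (by omega)]
      exact C a' hcase
    · -- here a' = p - 1 and j - i = p - 2, so the reflection is a period-p shift
      have h1 : a' = p - 1 ∧ j = i + (p - 2) := by omega
      apply hfc
      obtain ⟨t, ht⟩ := hdvd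
      have hac : ((a' : ℕ) : ℤ) = (p : ℤ) - 1 := by
        rw [h1.1]; push_cast [Nat.cast_sub (by omega : 1 ≤ p)]; ring
      have hjc : (j : ℤ) = (i : ℤ) + (p : ℤ) - 2 := by
        rw [h1.2]; push_cast [Nat.cast_sub (by omega : 2 ≤ p)]; ring
      rw [hac] at ht
      exact ⟨2 * t - 1, by rw [hjc]; linarith⟩
  -- composing the two reflections: a translation symmetry
  set d : ℤ := (i : ℤ) + (j : ℤ) - 1 - (n : ℤ) with hd
  have htrans : ∀ a : ℤ, f (a + d) = f a := by
    intro a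
    have := (S1 a).trans (S2 ((n : ℤ) - 1 - a))
    rw [show (i : ℤ) + (j : ℤ) - 2 - ((n : ℤ) - 1 - a) = a + d from by rw [hd]; ring] at this
    exact this.symm
  have hstep : ∀ t : ℤ, ∀ a : ℤ, f (a + t * d) = f a := by
    intro t
    induction t using Int.induction_on with
    | zero => simp
    | succ m ih =>
      intro a
      rw [show a + ((m : ℤ) + 1) * d = (a + m * d) + d from by ring, htrans, ih]
    | pred m ih =>
      intro a
      have := htrans (a + (-(m : ℤ) - 1) * d)
      rw [show a + (-(m : ℤ) - 1) * d + d = a + (-(m : ℤ)) * d from by ring, ih] at this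
      exact this.symm
  -- hence w has period gcd(p, |d|); by minimality p ∣ d
  set g : ℕ := Nat.gcd p d.natAbs with hg
  have hg0 : 0 < g := Nat.gcd_pos_of_pos_left _ hp0
  have hbez : (g : ℤ) = (p : ℤ) * Int.gcdA (p : ℤ) d + d * Int.gcdB (p : ℤ) d := by
    have h1 : (g : ℤ) = Int.gcd (p : ℤ) d := by
      rw [Int.gcd]; simp [hg]
    rw [h1]
    exact Int.gcd_eq_gcd_ab _ _
  have hfg : ∀ a : ℤ, f (a + (g : ℤ)) = f a := by
    intro a
    have e1 : f (a + (g : ℤ)) = f (a + Int.gcdB (p : ℤ) d * d) := by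
      apply hfc
      exact ⟨-Int.gcdA (p : ℤ) d, by rw [hbez]; ring⟩
    rw [e1, hstep]
  have hPg : HasPeriod w g := by
    refine ⟨hg0, fun m hm => ?_⟩
    have h1 : w[m]? = f m := (hfn m (by omega)).symm
    have h2 : w[m + g]? = f ((m + g : ℕ)) := (hfn (m + g) (by omega)).symm
    rw [h1, h2, show ((m + g : ℕ) : ℤ) = (m : ℤ) + (g : ℤ) from by push_cast; ring, hfg]
  have hgp : g = p := le_antisymm (Nat.le_of_dvd hp0 (Nat.gcd_dvd_left _ _)) (hmin g hPg)
  have hpd : (p : ℤ) ∣ d := by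
    have : g ∣ d.natAbs := Nat.gcd_dvd_right _ _
    rw [hgp] at this
    exact Int.dvd_natAbs.mp (Int.natCast_dvd_natCast.mpr this)
  -- conclude
  obtain ⟨t, ht⟩ := hpd
  have hz : ((i + j : ℕ) : ℤ) % (p : ℤ) = ((x.length + 1 : ℕ) : ℤ) % (p : ℤ) := by
    apply Int.ModEq.symm
    apply Int.modEq_iff_dvd.mpr
    refine ⟨t + k, ?_⟩
    have hnc : (n : ℤ) = (k : ℤ) * (p : ℤ) + (x.length : ℤ) := by exact_mod_cast hn
    rw [hd, hnc] at ht
    push_cast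
    linarith
  exact_mod_cast hz
end

section
/- Let s = w[i..j] be a leading subpalindrome of a string w, with canonical decomposition s = (uv)^k u (u, v palindromes, v ≠ ε, |uv| equal to the minimal period of s, k ≥ 1). Let t = w[i'..j] be the longest proper suffix-palindrome of s (i.e. i < i' ≤ j + 1 and w[i'..j] is a palindrome) whose occurrence is leading in w. Then t = u if s = uvu (i.e. k = 1), and t = uvu otherwise (i.e. if k ≥ 2). -/
/-- `(i, j)` is an occurrence of a subpalindrome of `w`. -/
def SubPalAt {α : Type*} (w : List α) (i j : ℕ) : Prop :=
  1 ≤ i ∧ i ≤ j + 1 ∧ j ≤ w.length ∧ (substr w i j).reverse = substr w i j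

/-- The occurrence `w[i..j]` is leading in `w`: every period `p` of every strictly longer
subpalindrome `w[i..j]` with the same right end satisfies `2p > j - i + 1`. -/
def LeadingAt {α : Type*} (w : List α) (i j : ℕ) : Prop :=
  ∀ i2 p : ℕ, 1 ≤ i2 → i2 < i → (substr w i2 j).reverse = substr w i2 j →
    HasPeriod (substr w i2 j) p → 2 * p > j + 1 - i

lemma drop_period {α : Type*} {s : List α} {p : ℕ} (m : ℕ) (h : HasPeriod s p) :
    HasPeriod (s.drop m) p := by
  refine ⟨h.1, fun x hx => ?_⟩
  rw [List.length_drop] at hx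
  rw [List.getElem?_drop, List.getElem?_drop]
  have := h.2 (m + x) (by omega)
  rwa [show m + x + p = m + (x + p) by omega] at this

lemma pal_drop_period {α : Type*} {s : List α} {q : ℕ} (h0 : 0 < q) (hs : s.reverse = s)
    (ht : (s.drop q).reverse = s.drop q) : HasPeriod s q := by
  refine ⟨h0, fun x hx => ?_⟩
  have hdl : (s.drop q).length = s.length - q := List.length_drop
  have hlt : x < (s.drop q).length := by omega
  have h1 : s[x + q]? = (s.drop q)[x]? := by rw [List.getElem?_drop]; congr 1; omega
  have h2 : (s.drop q)[x]? = (s.drop q)[(s.drop q).length - 1 - x]? := by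
    conv_lhs => rw [← ht]
    rw [List.getElem?_reverse hlt]
  have h3 : (s.drop q)[(s.drop q).length - 1 - x]? = s[s.length - 1 - x]? := by
    rw [List.getElem?_drop]; congr 1; omega
  have h4 : s[s.length - 1 - x]? = s[x]? := by
    have h5 := List.getElem?_reverse (l := s) (i := s.length - 1 - x) (by omega)
    rw [hs] at h5
    rw [h5]; congr 1; omega
  rw [h1, h2, h3, h4]

lemma sub_period {α : Type*} {s : List α} {p q : ℕ} (hp : HasPeriod s p) (hq : HasPeriod s q)
    (hpq : p < q) (hn : p + q ≤ s.length) : HasPeriod s (q - p) := by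
  refine ⟨by omega, fun x hx => ?_⟩
  rcases le_or_gt p x with h | h
  · have e1 := hp.2 (x - p) (by omega)
    have e2 := hq.2 (x - p) (by omega)
    rw [show x - p + p = x by omega] at e1
    rw [show x - p + q = x + (q - p) by omega] at e2
    rw [← e1, e2]
  · have e1 := hq.2 x (by omega)
    have e2 := hp.2 (x + (q - p)) (by omega)
    rw [show x + (q - p) + p = x + q by omega] at e2
    rw [e1, ← e2]

lemma fw_aux {α : Type*} (s : List α) : ∀ N p q : ℕ, p + q ≤ N → HasPeriod s p →
    HasPeriod s q → p + q ≤ s.length → HasPeriod s (Nat.gcd p q) := by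
  intro N
  induction N with
  | zero => intro p q h hp _ _; exact absurd hp.1 (by omega)
  | succ N ih =>
    intro p q hN hp hq hn
    rcases lt_trichotomy p q with h | h | h
    · have := ih p (q - p) (by have := hp.1; omega) hp (sub_period hp hq h hn) (by omega)
      rwa [Nat.gcd_sub_self_right h.le] at this
    · subst h; rwa [Nat.gcd_self]
    · have := ih (p - q) q (by have := hq.1; omega) (sub_period hq hp h (by omega)) hq (by omega)
      rwa [Nat.gcd_sub_self_left h.le] at this

lemma lift_period {α : Type*} {s : List α} {p g m : ℕ} (hp : HasPeriod s p)
    (hg : HasPeriod (s.drop m) g) (hlen : m + p + g ≤ s.length) : HasPeriod s g := by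
  have hg1 := hg.1
  have hp1 := hp.1
  refine ⟨hg1, fun x hx => ?_⟩
  have key : ∀ c x, s.length - x ≤ c → x + g < s.length → s[x]? = s[x + g]? := by
    intro c
    induction c with
    | zero => intro x h1 h2; omega
    | succ c ih =>
      intro x h1 h2
      rcases le_or_gt m x with h | h
      · have := hg.2 (x - m) (by rw [List.length_drop]; omega)
        rw [List.getElem?_drop, List.getElem?_drop] at this
        rwa [show m + (x - m) = x by omega, show m + (x - m + g) = x + g by omega] at this
      · have e1 := hp.2 x (by omega)
        have e2 := hp.2 (x + g) (by omega)
        have e3 := ih (x + p) (by omega) (by omega)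
        rw [e1, e2, show x + g + p = x + p + g by omega]
        exact e3
  exact key (s.length - x) x le_rfl hx

lemma substr_drop {α : Type*} (w : List α) {i i2 : ℕ} (j : ℕ) (h1 : 1 ≤ i) (h2 : i ≤ i2) :
    substr w i2 j = (substr w i j).drop (i2 - i) := by
  unfold substr
  rw [List.drop_take, List.drop_drop]
  rw [show i - 1 + (i2 - i) = i2 - 1 by omega, show j + 1 - i - (i2 - i) = j + 1 - i2 by omega]

lemma substr_length {α : Type*} (w : List α) {i j : ℕ} (h1 : 1 ≤ i) (h3 : j ≤ w.length) :
    (substr w i j).length = j + 1 - i := by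
  simp only [substr, List.length_take, List.length_drop]
  omega

/-- If `s = w[i..j]` is a leading subpalindrome of `w` with canonical decomposition
`(uv)^k u` and `t = w[i'..j]` is the longest proper suffix-palindrome of `s` whose
occurrence is leading in `w`, then `t = u` if `k = 1`, and `t = uvu` if `k ≥ 2`. -/
theorem stmt_9 {α : Type*} (w u v : List α) (i j i' k : ℕ)
    (hsub : SubPalAt w i j) (hlead : LeadingAt w i j)
    (hu : u.reverse = u) (hv : v.reverse = v) (hvne : v ≠ [])
    (hper : HasPeriod (substr w i j) (u.length + v.length))
    (hmin : ∀ q, HasPeriod (substr w i j) q → u.length + v.length ≤ q)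
    (hk : 1 ≤ k) (hdec : substr w i j = listPow (u ++ v) k ++ u)
    (hi' : i < i') (hsub' : SubPalAt w i' j) (hlead' : LeadingAt w i' j)
    (hlongest : ∀ i'', i < i'' → SubPalAt w i'' j → LeadingAt w i'' j → i' ≤ i'') :
    (k = 1 → substr w i' j = u) ∧ (2 ≤ k → substr w i' j = u ++ v ++ u) := by
  obtain ⟨hi1, hij, hjw, hpal⟩ := hsub
  have hP : 0 < u.length + v.length := hper.1
  have hvL : 0 < v.length := List.length_pos_iff.mpr hvne
  have hslen : (substr w i j).length = j + 1 - i := substr_length w hi1 hjw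
  have hn : j + 1 - i = k * (u.length + v.length) + u.length := by
    rw [← hslen, hdec]
    simp [listPow_length]
  -- any proper suffix palindrome gives a period
  have hqper : ∀ i2, i < i2 → (substr w i2 j).reverse = substr w i2 j →
      HasPeriod (substr w i j) (i2 - i) := by
    intro i2 hii2 hpal2
    have hd := substr_drop w j hi1 (le_of_lt hii2)
    exact pal_drop_period (by omega) hpal (by rw [← hd]; exact hpal2)
  have hqP : ∀ i2, i < i2 → (substr w i2 j).reverse = substr w i2 j →
      u.length + v.length ≤ i2 - i := fun i2 h hp2 => hmin _ (hqper i2 h hp2)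
  constructor
  · -- k = 1 : answer is u
    intro hk1
    subst hk1
    have hn1 : j + 1 - i = (u.length + v.length) + u.length := by omega
    have hdropU : (substr w i j).drop (u.length + v.length) = u := by
      rw [hdec]
      have h1 : listPow (u ++ v) 1 = u ++ v := by simp [listPow]
      rw [h1, show u.length + v.length = (u ++ v).length by simp, List.drop_left]
    have hsubstrU : substr w (i + (u.length + v.length)) j = u := by
      rw [substr_drop w j hi1 (by omega), show i + (u.length + v.length) - i =
        u.length + v.length by omega, hdropU]
    have hsubU : SubPalAt w (i + (u.length + v.length)) j :=
      ⟨by omega, by omega, hjw, by rw [hsubstrU]; exact hu⟩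
    have hleadU : LeadingAt w (i + (u.length + v.length)) j := by
      intro i2 p2 h1 h2 hpal2 hper2
      rcases lt_trichotomy i2 i with hlt | heq | hgt
      · have := hlead i2 p2 h1 hlt hpal2 hper2
        omega
      · subst heq
        have := hmin p2 hper2
        omega
      · have := hqP i2 hgt hpal2
        omega
    have hle := hlongest _ (by omega) hsubU hleadU
    have hge : i + (u.length + v.length) ≤ i' := by
      have := hqP i' hi' hsub'.2.2.2
      omega
    rw [show i' = i + (u.length + v.length) by omega]
    exact hsubstrU
  · -- k ≥ 2 : answer is u ++ v ++ u
    intro hk2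
    obtain ⟨B, hAB, hBge, hBdvd, hdropB⟩ : ∃ B, B + (u.length + v.length) =
        k * (u.length + v.length) ∧ (u.length + v.length) ≤ B ∧
        (u.length + v.length) ∣ B ∧ (substr w i j).drop B = u ++ v ++ u := by
      refine ⟨(k - 1) * (u.length + v.length), ?_, ?_, ?_, ?_⟩
      · obtain ⟨k0, rfl⟩ : ∃ k0, k = k0 + 1 := ⟨k - 1, by omega⟩
        simp [Nat.succ_mul]
      · exact Nat.le_mul_of_pos_left _ (by omega)
      · exact dvd_mul_left _ _
      · rw [hdec]
        obtain ⟨k0, rfl⟩ : ∃ k0, k = k0 + 1 := ⟨k - 1, by omega⟩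
        rw [listPow_succ', List.append_assoc]
        rw [show (k0 + 1 - 1) * (u.length + v.length) = (listPow (u ++ v) k0).length by
          simp [listPow_length]]
        rw [List.drop_left, List.append_assoc]
    rw [← hAB] at hn
    -- key: for any proper suffix palindrome between i and i + B, its offset is a
    -- multiple of the period, hence at distance ≥ P from B
    have hmult : ∀ i2, i < i2 → i2 - i < B → (substr w i2 j).reverse = substr w i2 j →
        i2 - i + (u.length + v.length) ≤ B := by
      intro i2 hgt hlt hpal2
      have hq := hqper i2 hgt hpal2
      have hqge := hmin _ hq
      have hfw := fw_aux (substr w i j) ((i2 - i) + (u.length + v.length)) (i2 - i)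
        (u.length + v.length) le_rfl hq hper (by omega)
      have hgcd : Nat.gcd (i2 - i) (u.length + v.length) = u.length + v.length :=
        le_antisymm (Nat.le_of_dvd hP (Nat.gcd_dvd_right _ _)) (hmin _ hfw)
      have hdvd : (u.length + v.length) ∣ (i2 - i) := hgcd ▸ Nat.gcd_dvd_left _ _
      have h1 : (u.length + v.length) ∣ (B - (i2 - i)) := Nat.dvd_sub hBdvd hdvd
      have h2 := Nat.le_of_dvd (by omega) h1
      omega
    have hsubstrB : substr w (i + B) j = u ++ v ++ u := by
      rw [substr_drop w j hi1 (by omega), show i + B - i = B by omega, hdropB]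
    have hpalB : (u ++ v ++ u).reverse = u ++ v ++ u := by
      simp [List.reverse_append, hu, hv]
    have hsubB : SubPalAt w (i + B) j :=
      ⟨by omega, by omega, hjw, by rw [hsubstrB]; exact hpalB⟩
    have hleadB : LeadingAt w (i + B) j := by
      intro i2 p2 h1 h2 hpal2 hper2
      rcases lt_trichotomy i2 i with hlt | heq | hgt
      · have := hlead i2 p2 h1 hlt hpal2 hper2
        omega
      · subst heq
        have := hmin p2 hper2
        omega
      · have hqB := hmult i2 hgt (by omega) hpal2
        by_contra hcon
        push_neg at hcon
        have hd := substr_drop w j hi1 (le_of_lt hgt)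
        have htP : HasPeriod (substr w i2 j) (u.length + v.length) := by
          rw [hd]; exact drop_period _ hper
        have htlen : (substr w i2 j).length = (j + 1 - i) - (i2 - i) := by
          rw [hd, List.length_drop, hslen]
        have hp2pos := hper2.1
        have hfw2 := fw_aux (substr w i2 j) (p2 + (u.length + v.length)) p2
          (u.length + v.length) le_rfl hper2 htP (by omega)
        have hgle : Nat.gcd p2 (u.length + v.length) ≤ p2 :=
          Nat.le_of_dvd hp2pos (Nat.gcd_dvd_left _ _)
        have hlift : HasPeriod (substr w i j) (Nat.gcd p2 (u.length + v.length)) := by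
          refine lift_period hper (m := i2 - i) ?_ (by omega)
          rw [← hd]; exact hfw2
        have := hmin _ hlift
        omega
    have hle := hlongest _ (by omega) hsubB hleadB
    have hge : i + B ≤ i' := by
      by_contra hcon
      push_neg at hcon
      have hqB := hmult i' hi' (by omega) hsub'.2.2.2
      have := hlead' i (u.length + v.length) hi1 hi' hpal hper
      omega
    rw [show i' = i + B by omega]
    exact hsubstrB
end

section
/- Let s = w[i..j] be a nonempty leading subpalindrome of a string w with minimal period p, and let d be the length of the longest proper suffix-palindrome w[i'..j] of s (i < i' ≤ j + 1) whose occurrence is leading in w. Then d = min{ |s| − p, p + (|s| mod p) }. -/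
namespace StmtAux

variable {α : Type*}

lemma hasPeriod_iff {s : List α} {m : ℕ} (hm : 0 < m) :
    HasPeriod s m ↔ s.drop m = s.take (s.length - m) := by
  constructor
  · rintro ⟨-, h⟩
    apply List.ext_getElem?
    intro n
    rw [List.getElem?_drop, List.getElem?_take]
    split
    · rename_i hn
      rw [show m + n = n + m by omega]
      exact (h n (by omega)).symm
    · rename_i hn
      exact List.getElem?_eq_none (by omega)
  · intro h
    refine ⟨hm, fun x hx => ?_⟩
    have h2 := congrArg (fun l => l[x]?) h
    simp only [List.getElem?_drop, List.getElem?_take] at h2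
    rw [if_pos (by omega)] at h2
    rw [show x + m = m + x by omega]
    exact h2.symm

lemma hasPeriod_mul {s : List α} {p : ℕ} (hp : HasPeriod s p) (k : ℕ) (hk : 0 < k) :
    HasPeriod s (k * p) := by
  obtain ⟨hp0, hper⟩ := hp
  refine ⟨by positivity, ?_⟩
  induction k with
  | zero => omega
  | succ k ih =>
    intro x hx
    rcases Nat.eq_zero_or_pos k with rfl | hk0
    · simpa using hper x (by simpa using hx)
    · have h1 : x + k * p < s.length := by
        have : k * p ≤ (k+1) * p := Nat.mul_le_mul_right p (by omega)
        omega
      have h2 := ih hk0 x h1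
      have h3 := hper (x + k * p) (by rw [show x + k*p + p = x + (k+1)*p by ring]; exact hx)
      rw [h2, h3, show x + k*p + p = x + (k+1)*p by ring]

lemma fine_wilf (s : List α) : ∀ ab a b, a + b = ab → HasPeriod s a → HasPeriod s b →
    a + b ≤ s.length → HasPeriod s (Nat.gcd a b) := by
  intro ab
  induction ab using Nat.strong_induction_on with
  | _ ab ih =>
    intro a b hab ha hb hlen
    rcases lt_trichotomy a b with h | h | h
    · have ha0 := ha.1
      have hb0 := hb.1
      have hper : HasPeriod s (b - a) := by
        refine ⟨by omega, fun x hx => ?_⟩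
        by_cases hxa : x + b < s.length
        · have e1 := hb.2 x hxa
          have e2 := ha.2 (x + (b - a)) (by omega)
          rw [show x + (b-a) + a = x + b by omega] at e2
          rw [e1, ← e2]
        · have hxb : a ≤ x := by omega
          have e1 := ha.2 (x - a) (by omega)
          have e2 := hb.2 (x - a) (by omega)
          rw [show x - a + a = x by omega] at e1
          rw [show x - a + b = x + (b - a) by omega] at e2
          rw [← e1, e2]
      have := ih (a + (b - a)) (by omega) a (b - a) rfl ha hper (by omega)
      rwa [Nat.gcd_sub_self_right (by omega)] at this
    · subst h
      simpa [Nat.gcd_self] using ha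
    · have hb0 := hb.1
      have ha0 := ha.1
      have hper : HasPeriod s (a - b) := by
        refine ⟨by omega, fun x hx => ?_⟩
        by_cases hxa : x + a < s.length
        · have e1 := ha.2 x hxa
          have e2 := hb.2 (x + (a - b)) (by omega)
          rw [show x + (a-b) + b = x + a by omega] at e2
          rw [e1, ← e2]
        · have hxb : b ≤ x := by omega
          have e1 := hb.2 (x - b) (by omega)
          have e2 := ha.2 (x - b) (by omega)
          rw [show x - b + b = x by omega] at e1
          rw [show x - b + a = x + (a - b) by omega] at e2
          rw [← e1, e2]
      have := ih (a - b + b) (by omega) (a - b) b rfl hper hb (by omega)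
      rwa [Nat.gcd_sub_self_left (by omega)] at this

/-- Extension of a small period of a long suffix to the whole word. -/
lemma extend_period {s : List α} {p g m : ℕ} (hp : HasPeriod s p) (hg : HasPeriod (s.drop m) g)
    (hlen : p + g ≤ s.length - m) : HasPeriod s g := by
  obtain ⟨hp0, hpp⟩ := hp
  obtain ⟨hg0, hgg⟩ := hg
  refine ⟨hg0, ?_⟩
  have key : ∀ k x, m - x ≤ k → x + g < s.length → s[x]? = s[x + g]? := by
    intro k
    induction k with
    | zero =>
      intro x hx hxg
      have e := hgg (x - m) (by simp; omega)
      rw [List.getElem?_drop, List.getElem?_drop] at e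
      rw [show m + (x - m) = x by omega] at e
      rwa [show m + (x - m + g) = x + g by omega] at e
    | succ k ih =>
      intro x hx hxg
      by_cases hxm : m ≤ x
      · have e := hgg (x - m) (by simp; omega)
        rw [List.getElem?_drop, List.getElem?_drop] at e
        rw [show m + (x - m) = x by omega] at e
        rwa [show m + (x - m + g) = x + g by omega] at e
      · have e1 := hpp x (by omega)
        have e2 := hpp (x + g) (by omega)
        have e3 := ih (x + p) (by omega) (by omega)
        rw [e1, e3, show x + p + g = x + g + p by omega]
        exact e2.symm
  exact fun x hx => key (m - x) x le_rfl hx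

lemma suffixpal_period {s : List α} (hs : s.reverse = s) {m : ℕ} (hm0 : 0 < m)
    (hpal : (s.drop m).reverse = s.drop m) : HasPeriod s m := by
  rw [List.reverse_drop, hs] at hpal
  exact (hasPeriod_iff hm0).2 hpal.symm

lemma period_suffixpal {s : List α} (hs : s.reverse = s) {m : ℕ} (hm : HasPeriod s m) :
    (s.drop m).reverse = s.drop m := by
  rw [List.reverse_drop, hs, ← (hasPeriod_iff hm.1).1 hm]

lemma hasPeriod_drop {s : List α} {q : ℕ} (m : ℕ) (h : HasPeriod s q) :
    HasPeriod (s.drop m) q := by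
  refine ⟨h.1, fun x hx => ?_⟩
  rw [List.getElem?_drop, List.getElem?_drop]
  simp only [List.length_drop] at hx
  rw [show m + (x + q) = (m + x) + q by omega]
  exact h.2 (m + x) (by omega)

lemma substr_length {w : List α} {i j : ℕ} (hi : 1 ≤ i) (hj : j ≤ w.length) :
    (substr w i j).length = j + 1 - i := by
  simp only [substr, List.length_take, List.length_drop]
  omega

lemma substr_drop {w : List α} {i i2 j : ℕ} (h1 : 1 ≤ i) (h2 : i ≤ i2) (h3 : i ≤ j + 1) :
    substr w i2 j = (substr w i j).drop (i2 - i) := by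
  simp only [substr, List.drop_take, List.drop_drop]
  congr 1
  · omega
  · congr 1
    omega

end StmtAux

/-- If `s = w[i..j]` is a nonempty leading subpalindrome of `w` with minimal period `p`
and `d` is the length of the longest proper suffix-palindrome of `s` whose occurrence is
leading in `w`, then `d = min (|s| - p) (p + |s| % p)`. -/
theorem stmt_10 {α : Type*} (w : List α) (i j i' p : ℕ) (hne : i ≤ j)
    (hsub : SubPalAt w i j) (hlead : LeadingAt w i j)
    (hper : HasPeriod (substr w i j) p) (hmin : ∀ q, HasPeriod (substr w i j) q → p ≤ q)
    (hi' : i < i') (hsub' : SubPalAt w i' j) (hlead' : LeadingAt w i' j)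
    (hlongest : ∀ i'', i < i'' → SubPalAt w i'' j → LeadingAt w i'' j → i' ≤ i'') :
    j + 1 - i' = min ((j + 1 - i) - p) (p + (j + 1 - i) % p) := by
  obtain ⟨hi1, hij1, hjw, hpal⟩ := hsub
  obtain ⟨hi'1, hi'j1, -, hpal'⟩ := hsub'
  have hp0 : 0 < p := hper.1
  have hsL : (substr w i j).length = j + 1 - i := StmtAux.substr_length hi1 hjw
  have hpL : p ≤ j + 1 - i := by
    refine hmin _ ⟨by omega, fun x hx => ?_⟩
    rw [hsL] at hx
    exact absurd hx (by omega)
  have hrp : (j + 1 - i) % p < p := Nat.mod_lt _ hp0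
  have hA : ((j + 1 - i) / p) * p + (j + 1 - i) % p = j + 1 - i := by
    rw [Nat.mul_comm]; exact Nat.div_add_mod _ p
  have hq1 : 1 ≤ (j + 1 - i) / p := (Nat.one_le_div_iff hp0).2 hpL
  set L := j + 1 - i with hL
  set r := L % p with hr
  set qq := L / p with hqq
  set D := min (L - p) (p + r) with hD
  have hDlp : D ≤ L - p := min_le_left _ _
  have hDpr : D ≤ p + r := min_le_right _ _
  have hDL : D < L := by omega
  have hsubdrop : ∀ i2, i ≤ i2 → substr w i2 j = (substr w i j).drop (i2 - i) :=
    fun i2 h2 => StmtAux.substr_drop hi1 h2 hij1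
  have gap : ∀ i2, i < i2 → i2 ≤ j + 1 →
      (substr w i2 j).reverse = substr w i2 j →
      p ≤ i2 - i ∧ (p ≤ j + 1 - i2 → p ∣ (i2 - i)) := by
    intro i2 h1 h2 hpal2
    rw [hsubdrop i2 (le_of_lt h1)] at hpal2
    have hperm : HasPeriod (substr w i j) (i2 - i) :=
      StmtAux.suffixpal_period hpal (by omega) hpal2
    refine ⟨hmin _ hperm, fun hl => ?_⟩
    have hgcd : HasPeriod (substr w i j) (Nat.gcd (i2 - i) p) :=
      StmtAux.fine_wilf _ _ _ _ rfl hperm hper (by rw [hsL]; omega)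
    have h4 := hmin _ hgcd
    have h5 : Nat.gcd (i2 - i) p = p :=
      le_antisymm (Nat.gcd_le_right _ hp0) h4
    exact h5 ▸ Nat.gcd_dvd_left _ _
  have big : ∀ i2, i < i2 → i2 ≤ j + 1 →
      (substr w i2 j).reverse = substr w i2 j →
      p + r < j + 1 - i2 → 2 * p ≤ j + 1 - i2 := by
    intro i2 h1 h2 hpal2 hbig
    obtain ⟨hple, hdvd⟩ := gap i2 h1 h2 hpal2
    obtain ⟨k, hk⟩ := hdvd (by omega)
    have hkL : p * k ≤ L := by omega
    have hmod : (j + 1 - i2) % p = r := by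
      rw [show j + 1 - i2 = L - p * k by omega, Nat.sub_mul_mod hkL, hr]
    have hdm := Nat.div_add_mod (j + 1 - i2) p
    rw [hmod] at hdm
    have h6 : 2 ≤ (j + 1 - i2) / p := by
      by_contra h7
      have := Nat.mul_le_mul_left p (show (j + 1 - i2) / p ≤ 1 by omega)
      omega
    have := Nat.mul_le_mul_left p h6
    omega
  set i0 := j + 1 - D with hi0
  have hii0 : i < i0 := by omega
  have hDval : j + 1 - i0 = D := by omega
  have hperLD : HasPeriod (substr w i j) (i0 - i) := by
    rcases Nat.lt_or_ge qq 2 with hqc | hqc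
    · have hA' := hA
      rw [show qq = 1 by omega, one_mul] at hA'
      rw [show i0 - i = p by omega]
      exact hper
    · have h2p : 2 * p ≤ qq * p := Nat.mul_le_mul_right p hqc
      have hsub1 : (qq - 1) * p = qq * p - 1 * p := Nat.sub_mul qq 1 p
      rw [one_mul] at hsub1
      rw [show i0 - i = (qq - 1) * p by omega]
      exact StmtAux.hasPeriod_mul hper (qq - 1) (by omega)
  have hpal0 : (substr w i0 j).reverse = substr w i0 j := by
    rw [hsubdrop i0 (le_of_lt hii0)]
    exact StmtAux.period_suffixpal hpal hperLD
  have hsub0 : SubPalAt w i0 j := ⟨by omega, by omega, hjw, hpal0⟩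
  have hlead0 : LeadingAt w i0 j := by
    intro i2 q' h1 h2 hpal2 hperq'
    rcases lt_trichotomy i2 i with hc | hc | hc
    · have := hlead i2 q' h1 hc hpal2 hperq'
      omega
    · subst hc
      have := hmin q' hperq'
      omega
    · by_contra hcon
      push_neg at hcon
      have hi2j : i2 ≤ j + 1 := by omega
      obtain ⟨hple, -⟩ := gap i2 hc hi2j hpal2
      rcases Nat.lt_or_ge qq 2 with hqc | hqc
      · have hA' := hA
        rw [show qq = 1 by omega, one_mul] at hA'
        omega
      · have h2p : 2 * p ≤ qq * p := Nat.mul_le_mul_right p hqc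
        have h2l : 2 * p ≤ j + 1 - i2 := big i2 hc hi2j hpal2 (by omega)
        have htper : HasPeriod (substr w i2 j) p := by
          rw [hsubdrop i2 (le_of_lt hc)]
          exact StmtAux.hasPeriod_drop _ hper
        have htL : (substr w i2 j).length = j + 1 - i2 :=
          StmtAux.substr_length (by omega) hjw
        have hq'0 : 0 < q' := hperq'.1
        have hgle : Nat.gcd q' p ≤ q' := Nat.gcd_le_left p hq'0
        have hgcd : HasPeriod (substr w i2 j) (Nat.gcd q' p) :=
          StmtAux.fine_wilf _ _ _ _ rfl hperq' htper (by rw [htL]; omega)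
        have hgs : HasPeriod (substr w i j) (Nat.gcd q' p) := by
          rw [hsubdrop i2 (le_of_lt hc)] at hgcd
          exact StmtAux.extend_period hper hgcd (by rw [hsL]; omega)
        have := hmin _ hgs
        omega
  have hle : i' ≤ i0 := hlongest i0 hii0 hsub0 hlead0
  have hge : i0 ≤ i' := by
    by_contra hcon
    push_neg at hcon
    obtain ⟨hple, -⟩ := gap i' hi' hi'j1 hpal'
    rcases Nat.lt_or_ge qq 2 with hqc | hqc
    · have hA' := hA
      rw [show qq = 1 by omega, one_mul] at hA'
      omega
    · have h2p : 2 * p ≤ qq * p := Nat.mul_le_mul_right p hqc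
      have h2l : 2 * p ≤ j + 1 - i' := big i' hi' hi'j1 hpal' (by omega)
      have := hlead' i p hi1 hi' hpal hper
      omega
  omega
end

section
/- Let u and v be suffix-palindromes of a string w whose occurrences as suffixes are both leading in w, with |u| > |v|. Then 2|u| > 3|v|. -/
/-- A suffix-palindrome of `w` whose occurrence (as a suffix) is leading in `w`. -/
def LeadingSufPal {α : Type*} (w u : List α) : Prop :=
  u <:+ w ∧ u.reverse = u ∧ LeadingAt w (w.length - u.length + 1) w.length

lemma suffix_of_suffix_len_le {α : Type*} {w u v : List α}
    (hv : v <:+ w) (hu : u <:+ w) (h : v.length ≤ u.length) : v <:+ u := by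
  rw [← List.reverse_prefix] at hv hu ⊢
  exact List.prefix_of_prefix_length_le hv hu (by simpa using h)

/-- If `u`, `v` are leading suffix-palindromes of `w` with `|u| > |v|`, then `2|u| > 3|v|`. -/
theorem stmt_11 {α : Type*} (w u v : List α)
    (hu : LeadingSufPal w u) (hv : LeadingSufPal w v) (hlen : v.length < u.length) :
    2 * u.length > 3 * v.length := by
  obtain ⟨husuf, hupal, _⟩ := hu
  obtain ⟨hvsuf, hvpal, hvlead⟩ := hv
  have hule : u.length ≤ w.length := husuf.length_le
  have hvle : v.length ≤ w.length := hvsuf.length_le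
  have hvsu : v <:+ u := suffix_of_suffix_len_le hvsuf husuf hlen.le
  have hvpre : v <+: u := by
    have h2 : v.reverse <:+ u.reverse := by rw [hupal, hvpal]; exact hvsu
    exact List.reverse_suffix.mp h2
  set p := u.length - v.length with hp
  obtain ⟨s, hs⟩ := hvsu
  obtain ⟨t, ht⟩ := hvpre
  have hslen : s.length = p := by
    have := congrArg List.length hs
    simp at this; omega
  have hper : HasPeriod u p := by
    refine ⟨by omega, fun i hi => ?_⟩
    have h1 : u[i]? = v[i]? := by
      rw [← ht]
      exact List.getElem?_append_left (by omega)
    have h2 : u[i + p]? = v[i]? := by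
      rw [← hs]
      rw [List.getElem?_append_right (by omega)]
      congr 1
      omega
    rw [h1, h2]
  have hsub : substr w (w.length - u.length + 1) w.length = u := by
    obtain ⟨x, hx⟩ := husuf
    have hxlen : x.length + u.length = w.length := by
      have := congrArg List.length hx
      simpa using this
    simp only [substr, Nat.add_sub_cancel]
    rw [show w.length - u.length = x.length by omega,
      show w.length + 1 - (x.length + 1) = u.length by omega, ← hx,
      List.drop_left, List.take_of_length_le (le_refl _)]
  have key := hvlead (w.length - u.length + 1) p (by omega) (by omega)
    (by rw [hsub]; exact hupal) (by rw [hsub]; exact hper)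
  omega
end

section
/- Every non-leading subpalindrome occurrence is a suffix of a leading cubic subpalindrome occurrence with the same right end: if w[i..j] is a nonempty subpalindrome of w that is not leading in w, then there exists i' < i such that w[i'..j] is a subpalindrome of w that is leading in w and cubic. -/
namespace Aux13

lemma hasPeriod_drop {α : Type*} {s : List α} {p : ℕ} (k : ℕ) (h : HasPeriod s p) :
    HasPeriod (s.drop k) p := by
  refine ⟨h.1, fun m hm => ?_⟩
  rw [List.getElem?_drop, List.getElem?_drop]
  have hm' : (k + m) + p < s.length := by
    rw [List.length_drop] at hm; omega
  have := h.2 (k + m) hm'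
  rwa [show k + (m + p) = (k + m) + p from by omega]

lemma hasPeriod_of_pal_drop {α : Type*} {s : List α} {k : ℕ} (hk : 0 < k)
    (hs : s.reverse = s) (ht : (s.drop k).reverse = s.drop k) : HasPeriod s k := by
  refine ⟨hk, fun m hm => ?_⟩
  set n := s.length with hn
  have h1 : s[m]? = s[n - 1 - m]? := by
    conv_lhs => rw [← hs]
    rw [List.getElem?_reverse (by omega)]
  have hx : n - 1 - m - k < (s.drop k).length := by
    rw [List.length_drop]; omega
  have h2 : (s.drop k)[n - 1 - m - k]? = (s.drop k)[(s.drop k).length - 1 - (n - 1 - m - k)]? := by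
    conv_lhs => rw [← ht]
    rw [List.getElem?_reverse hx]
  rw [List.getElem?_drop, List.getElem?_drop, List.length_drop] at h2
  rw [show k + (n - 1 - m - k) = n - 1 - m from by omega,
      show k + (n - k - 1 - (n - 1 - m - k)) = m + k from by omega] at h2
  rw [h1, h2]

lemma period_sub {α : Type*} {s : List α} {a b : ℕ} (ha : HasPeriod s a) (hb : HasPeriod s b)
    (hba : b < a) (hab : a + b ≤ s.length) : HasPeriod s (a - b) := by
  refine ⟨by omega, fun m hm => ?_⟩
  by_cases hc : m + a < s.length
  · have h1 := ha.2 m hc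
    have h2 := hb.2 (m + a - b) (by omega)
    rw [show m + a - b + b = m + a from by omega] at h2
    rw [h1, ← h2, show m + a - b = m + (a - b) from by omega]
  · have hmb : b ≤ m := by omega
    have h1 := hb.2 (m - b) (by omega)
    have h2 := ha.2 (m - b) (by omega)
    rw [show m - b + b = m from by omega] at h1
    rw [show m - b + a = m + (a - b) from by omega] at h2
    rw [← h1, h2]

lemma finewilf {α : Type*} {s : List α} :
    ∀ n a b, a + b = n → HasPeriod s a → HasPeriod s b → n ≤ s.length →
      HasPeriod s (Nat.gcd a b) := by
  intro n
  induction n using Nat.strong_induction_on with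
  | _ n ih =>
    intro a b hn ha hb hlen
    have ha0 := ha.1
    have hb0 := hb.1
    rcases lt_trichotomy a b with h | h | h
    · have hba : HasPeriod s (b - a) := period_sub hb ha h (by omega)
      have key := ih (a + (b - a)) (by omega) a (b - a) rfl ha hba (by omega)
      rwa [show Nat.gcd a (b - a) = Nat.gcd a b from by
        conv_rhs => rw [← Nat.sub_add_cancel h.le]
        rw [Nat.gcd_add_self_right]] at key
    · subst h; rwa [Nat.gcd_self]
    · have hab : HasPeriod s (a - b) := period_sub ha hb h (by omega)
      have key := ih ((a - b) + b) (by omega) (a - b) b rfl hab hb (by omega)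
      rwa [show Nat.gcd (a - b) b = Nat.gcd a b from by
        conv_rhs => rw [← Nat.sub_add_cancel h.le]
        rw [Nat.gcd_add_self_left]] at key

lemma transfer_aux {α : Type*} {s : List α} {a b k : ℕ} (hb : HasPeriod s b)
    (ha : HasPeriod (s.drop k) a) (hab : a + b ≤ s.length - k) (hk : k ≤ s.length) :
    ∀ d m, k ≤ m + d * b → m + a < s.length → s[m]? = s[m + a]? := by
  intro d
  induction d with
  | zero =>
    intro m hkm hma
    simp only [Nat.zero_mul, Nat.add_zero] at hkm
    have := ha.2 (m - k) (by rw [List.length_drop]; omega)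
    rw [List.getElem?_drop, List.getElem?_drop] at this
    rwa [show k + (m - k) = m from by omega, show k + (m - k + a) = m + a from by omega] at this
  | succ d ihd =>
    intro m hkm hma
    by_cases hc : k ≤ m + d * b
    · exact ihd m hc hma
    · have hsm : k ≤ m + b + d * b := by rw [Nat.succ_mul] at hkm; omega
      have hmk : m < k := by omega
      have hbound : m + a + b < s.length := by omega
      have h1 := hb.2 m (by omega)
      have h2 := hb.2 (m + a) (by omega)
      have h3 := ihd (m + b) (by omega) (by omega)
      rw [h1, h3, show m + b + a = m + a + b from by omega, ← h2]

lemma period_transfer {α : Type*} {s : List α} {a b k : ℕ} (hb : HasPeriod s b)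
    (ha : HasPeriod (s.drop k) a) (hab : a + b ≤ s.length - k) (hk : k ≤ s.length) :
    HasPeriod s a := by
  refine ⟨ha.1, fun m hm => ?_⟩
  exact transfer_aux hb ha hab hk k m
    (by have h1 : k * 1 ≤ k * b := Nat.mul_le_mul_left k hb.1; omega) hm

lemma substr_length {α : Type*} (w : List α) {t j : ℕ} (ht : 1 ≤ t) (hj : j ≤ w.length) :
    (substr w t j).length = j + 1 - t := by
  simp only [substr, List.length_take, List.length_drop]
  omega

lemma substr_drop {α : Type*} (w : List α) {a b : ℕ} (j : ℕ) (ha : 1 ≤ a) (hab : a ≤ b) :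
    (substr w a j).drop (b - a) = substr w b j := by
  simp only [substr]
  rw [List.drop_take, List.drop_drop,
    show a - 1 + (b - a) = b - 1 from by omega,
    show j + 1 - a - (b - a) = j + 1 - b from by omega]

end Aux13

/-- A nonempty string is cubic if its minimal period `p` satisfies `3p ≤ |s|`. -/
def CubicStr {α : Type*} (s : List α) : Prop :=
  s ≠ [] ∧ ∃ p, HasPeriod s p ∧ (∀ q, HasPeriod s q → p ≤ q) ∧ 3 * p ≤ s.length

/-- Every nonempty non-leading subpalindrome occurrence of `w` is a suffix of a leading
cubic subpalindrome occurrence with the same right end. -/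
theorem stmt_13 {α : Type*} (w : List α) (i j : ℕ) (hne : i ≤ j)
    (hsub : SubPalAt w i j) (hnotlead : ¬ LeadingAt w i j) :
    ∃ i', 1 ≤ i' ∧ i' < i ∧ SubPalAt w i' j ∧ LeadingAt w i' j ∧
      CubicStr (substr w i' j) := by
  classical
  obtain ⟨h1i, hij1, hjw, hpal⟩ := hsub
  rw [LeadingAt] at hnotlead
  push_neg at hnotlead
  obtain ⟨i2, p0, h1i2, hi2i, hpal2, hper0, hle0⟩ := hnotlead
  have hlen2 : (substr w i2 j).length = j + 1 - i2 := Aux13.substr_length w h1i2 hjw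
  -- the minimal period `p` of `u = substr w i2 j`
  have hPex : ∃ q, HasPeriod (substr w i2 j) q := ⟨p0, hper0⟩
  set p := Nat.find hPex with hp_def
  have hperp : HasPeriod (substr w i2 j) p := Nat.find_spec hPex
  have hpmin : ∀ q, HasPeriod (substr w i2 j) q → p ≤ q := fun q hq => Nat.find_min' hPex hq
  have hp0 : 0 < p := hperp.1
  have hpp0 : p ≤ p0 := hpmin p0 hper0
  have h2p : 2 * p ≤ j + 1 - i := by omega
  -- `i'` : minimal left end of a palindrome ending at `j` with period `p`
  have hQex : ∃ t, 1 ≤ t ∧ (substr w t j).reverse = substr w t j ∧ HasPeriod (substr w t j) p :=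
    ⟨i2, h1i2, hpal2, hperp⟩
  set i' := Nat.find hQex with hi'_def
  obtain ⟨h1i', hpal', hperp'⟩ := Nat.find_spec hQex
  have hi'le : i' ≤ i2 := Nat.find_min' hQex ⟨h1i2, hpal2, hperp⟩
  have hi'i : i' < i := by omega
  have hlen' : (substr w i' j).length = j + 1 - i' := Aux13.substr_length w h1i' hjw
  have hdrop2 : (substr w i' j).drop (i2 - i') = substr w i2 j := Aux13.substr_drop w j h1i' hi'le
  -- any period of `substr w i' j` is at least `p`
  have hmin' : ∀ q, HasPeriod (substr w i' j) q → p ≤ q := by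
    intro q hq
    have h := Aux13.hasPeriod_drop (i2 - i') hq
    rw [hdrop2] at h
    exact hpmin q h
  -- cubicity:  `d = i - i'` is a period, and `p ∣ d`
  have hdropi : (substr w i' j).drop (i - i') = substr w i j :=
    Aux13.substr_drop w j h1i' (by omega)
  have hd : HasPeriod (substr w i' j) (i - i') := by
    apply Aux13.hasPeriod_of_pal_drop (by omega) hpal'
    rw [hdropi]; exact hpal
  have hgcd : HasPeriod (substr w i' j) (Nat.gcd p (i - i')) :=
    Aux13.finewilf (p + (i - i')) p (i - i') rfl hperp' hd (by rw [hlen']; omega)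
  have hgp : p ≤ Nat.gcd p (i - i') := hmin' _ hgcd
  have hpg : Nat.gcd p (i - i') ≤ p := Nat.le_of_dvd hp0 (Nat.gcd_dvd_left _ _)
  have hpd : p ∣ (i - i') := by
    have hgeq : Nat.gcd p (i - i') = p := le_antisymm hpg hgp
    rw [← hgeq]; exact Nat.gcd_dvd_right _ _
  have hdge : p ≤ i - i' := Nat.le_of_dvd (by omega) hpd
  have hcubic : 3 * p ≤ (substr w i' j).length := by rw [hlen']; omega
  -- the occurrence `(i', j)` is leading
  have hlead : LeadingAt w i' j := by
    intro i2' q h1' hlt' hpal'' hq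
    by_contra hcon
    push_neg at hcon
    have hlen'' : (substr w i2' j).length = j + 1 - i2' := Aux13.substr_length w h1' hjw
    have hdrop' : (substr w i2' j).drop (i' - i2') = substr w i' j :=
      Aux13.substr_drop w j h1' (le_of_lt hlt')
    have hq0 : 0 < q := hq.1
    have hd' : HasPeriod (substr w i2' j) (i' - i2') := by
      apply Aux13.hasPeriod_of_pal_drop (by omega) hpal''
      rw [hdrop']; exact hpal'
    have hg' : HasPeriod (substr w i2' j) (Nat.gcd q (i' - i2')) :=
      Aux13.finewilf (q + (i' - i2')) q (i' - i2') rfl hq hd' (by rw [hlen'']; omega)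
    have hg'q : Nat.gcd q (i' - i2') ≤ q := Nat.le_of_dvd hq0 (Nat.gcd_dvd_left _ _)
    have hpp : HasPeriod (substr w i2' j) p := by
      refine Aux13.period_transfer (k := i' - i2') hg' ?_ ?_ ?_
      · rw [hdrop']; exact hperp'
      · rw [hlen'']; omega
      · rw [hlen'']; omega
    exact Nat.find_min hQex hlt' ⟨h1', hpal'', hpp⟩
  refine ⟨i', h1i', hi'i, ⟨h1i', by omega, hjw, hpal'⟩, hlead, ?_, p, hperp', hmin', hcubic⟩
  have hpos : 0 < (substr w i' j).length := by rw [hlen']; omega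
  exact List.ne_nil_of_length_pos hpos
end

section
/- Let w be a nonempty string that is a concatenation of two palindromes. Then there exist palindromes x and y with w = xy such that either x is the longest prefix of w that is a palindrome, or y is the longest suffix of w that is a palindrome. -/
namespace PalPair

variable {α : Type*}

theorem gE {l : List α} {i j : ℕ} (hij : i = j) {hi : i < l.length} {hj : j < l.length} :
    l[i]'hi = l[j]'hj := by subst hij; rfl

/-- `l` has period `p`. -/
def Per (l : List α) (p : ℕ) : Prop :=
  ∀ i : ℕ, ∀ h : i + p < l.length, l[i]'(by omega) = l[i + p]'h

theorem per_take {l : List α} {p : ℕ} (h : Per l p) (k : ℕ) : Per (l.take k) p := by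
  intro i hi
  have hlen : (l.take k).length = min k l.length := by simp
  have h1 : i + p < l.length := by omega
  have := h i h1
  simp only [List.getElem_take]
  exact this

theorem per_drop {l : List α} {p : ℕ} (h : Per l p) (k : ℕ) : Per (l.drop k) p := by
  intro i hi
  have hlen : (l.drop k).length = l.length - k := by simp
  have h1 : k + i + p < l.length := by omega
  have := h (k + i) h1
  simp only [List.getElem_drop]
  exact this.trans (gE (by omega))

theorem per_mul {l : List α} {p : ℕ} (h : Per l p) : ∀ m, Per l (m * p) := by
  intro m
  induction m with
  | zero => intro i hi; exact gE (by omega)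
  | succ n ih =>
    intro i hi
    have hmul : (n + 1) * p = p + n * p := by ring
    have h1 : i + p + n * p < l.length := by omega
    have e1 := h i (by omega)
    have e2 := ih (i + p) h1
    exact (e1.trans e2).trans (gE (by omega))

theorem per_of_dvd {l : List α} {p d : ℕ} (h : Per l d) (hd : d ∣ p) : Per l p := by
  obtain ⟨k, hk⟩ := hd
  have h2 : Per l (k * d) := per_mul h k
  rwa [Nat.mul_comm, ← hk] at h2

/-- Propagation: if `l` has period `p` and its prefix of length `≥ p + d` has period `d`
with `d ∣ p`, `1 ≤ p`, then `l` has period `d`. -/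
theorem per_propagate {l : List α} {p d m : ℕ} (hp : Per l p) (hw : Per (l.take m) d)
    (hdvd : d ∣ p) (hp1 : 1 ≤ p) (hm : p + d ≤ m) : Per l d := by
  intro i
  induction i using Nat.strong_induction_on with
  | _ i ih =>
    intro hi
    by_cases hcase : i + d < m
    · have hlt : i + d < (l.take m).length := by simp; omega
      have := hw i hlt
      simpa using this
    · have hip : p ≤ i := by omega
      have e1 := hp (i - p) (by omega)
      have e2 := hp (i - p + d) (by omega)
      have e3 := ih (i - p) (by omega) (by omega)
      calc l[i]'(by omega) = l[i - p + p]'(by omega) := gE (by omega)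
        _ = l[i - p]'(by omega) := e1.symm
        _ = l[i - p + d]'(by omega) := e3
        _ = l[i - p + d + p]'(by omega) := e2
        _ = l[i + d]'(by omega) := gE (by omega)

/-- Fine and Wilf (weak form). -/
theorem fine_wilf : ∀ n p q : ℕ, p + q = n → ∀ l : List α, 1 ≤ p → 1 ≤ q →
    p + q ≤ l.length → Per l p → Per l q → Per l (Nat.gcd p q) := by
  intro n
  induction n using Nat.strong_induction_on with
  | _ n ih =>
    intro p q hn l hp1 hq1 hlen hp hq
    rcases lt_trichotomy p q with hlt | heq | hgt
    · have key : Per (l.take (l.length - p)) (q - p) := by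
        intro i hi
        have hti : (l.take (l.length - p)).length = l.length - p := by simp
        have e1 := hp (i + (q - p)) (by omega)
        have e2 := hq i (by omega)
        simp only [List.getElem_take]
        exact e2.trans ((gE (by omega)).trans e1.symm)
      have hq' : Per (l.take (l.length - p)) p := per_take hp _
      have hti : (l.take (l.length - p)).length = l.length - p := by simp
      have hlen' : (q - p) + p ≤ (l.take (l.length - p)).length := by omega
      have hg := ih (q - p + p) (by omega) (q - p) p rfl (l.take (l.length - p))
        (by omega) hp1 hlen' key hq'
      have hgcd : Nat.gcd (q - p) p = Nat.gcd p q := by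
        rw [Nat.gcd_sub_self_left (by omega), Nat.gcd_comm]
      rw [hgcd] at hg
      have hd : Nat.gcd p q ∣ p := Nat.gcd_dvd_left p q
      have hdle : Nat.gcd p q ≤ p := Nat.le_of_dvd hp1 hd
      have hstep : Nat.gcd p q ≤ q - p :=
        Nat.le_of_dvd (by omega) (Nat.dvd_sub (Nat.gcd_dvd_right p q) (Nat.gcd_dvd_left p q))
      exact per_propagate hp hg hd hp1 (by omega)
    · subst heq
      simpa [Nat.gcd_self] using hp
    · have key : Per (l.take (l.length - q)) (p - q) := by
        intro i hi
        have hti : (l.take (l.length - q)).length = l.length - q := by simp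
        have e1 := hq (i + (p - q)) (by omega)
        have e2 := hp i (by omega)
        simp only [List.getElem_take]
        exact e2.trans ((gE (by omega)).trans e1.symm)
      have hp' : Per (l.take (l.length - q)) q := per_take hq _
      have hti : (l.take (l.length - q)).length = l.length - q := by simp
      have hlen' : (p - q) + q ≤ (l.take (l.length - q)).length := by omega
      have hg := ih (p - q + q) (by omega) (p - q) q rfl (l.take (l.length - q))
        (by omega) hq1 hlen' key hp'
      have hgcd : Nat.gcd (p - q) q = Nat.gcd p q := Nat.gcd_sub_self_left (by omega)
      rw [hgcd] at hg
      have hd : Nat.gcd p q ∣ q := Nat.gcd_dvd_right p q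
      have hdle : Nat.gcd p q ≤ q := Nat.le_of_dvd hq1 hd
      have hstep : Nat.gcd p q ≤ p - q :=
        Nat.le_of_dvd (by omega) (Nat.dvd_sub (Nat.gcd_dvd_left p q) (Nat.gcd_dvd_right p q))
      exact per_propagate hq hg hd hq1 (by omega)


theorem per_of_drop_prefix {l : List α} {p : ℕ} (h : l.drop p <+: l) : Per l p := by
  obtain ⟨s, hs⟩ := h
  intro i hi
  have h1 : i < (l.drop p).length := by simp; omega
  calc l[i]'(by omega)
      = ((l.drop p) ++ s)[i]'(by rw [hs]; omega) := getElem_congr_coll hs.symm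
    _ = (l.drop p)[i]'h1 := List.getElem_append_left h1
    _ = l[p + i]'(by omega) := List.getElem_drop
    _ = l[i + p]'hi := gE (by omega)

theorem per_of_border {l x y y' : List α} (hx : l = x ++ y) (hy : l = y' ++ x)
    (hlen : y'.length = y.length) : Per l y.length := by
  have hdx : l.drop y'.length = x := by rw [hy]; exact List.drop_left
  have hpre : l.drop y'.length <+: l := by rw [hdx, hx]; exact ⟨y, rfl⟩
  rw [← hlen]
  exact per_of_drop_prefix hpre

theorem per_drop_eq_take {l : List α} {p : ℕ} (h : Per l p) :
    l.drop p = l.take (l.length - p) := by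
  apply List.ext_getElem
  · simp
  · intro i h1 h2
    have hlen : (l.drop p).length = l.length - p := by simp
    have hip : i + p < l.length := by omega
    have := h i hip
    simp only [List.getElem_drop, List.getElem_take]
    exact (this.trans (gE (by omega))).symm

/-- Key lemma: if `w = a ++ b` with `a, b` palindromes, `u` is a palindromic prefix longer
than `a` and `v` is a palindromic suffix longer than `b`, then `w.drop u.length` is a
palindrome. -/
theorem key {w a b u v : List α} (hw : w = a ++ b) (ha : a.reverse = a) (hb : b.reverse = b)
    (hu : u <+: w) (hupal : u.reverse = u) (hul : a.length < u.length)
    (hv : v <:+ w) (hvpal : v.reverse = v) (hvl : b.length < v.length) :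
    (w.drop u.length).reverse = w.drop u.length := by
  have hn : w.length = a.length + b.length := by rw [hw]; simp
  have hmn : u.length ≤ w.length := hu.length_le
  have hνn : v.length ≤ w.length := hv.length_le
  set n := w.length with hn_def
  set c := a.length with hc_def
  set m := u.length with hm_def
  set ν := v.length with hν_def
  set τ := m - c with hτ_def
  set η := ν - b.length with hη_def
  have hτ1 : 1 ≤ τ := by omega
  have hη1 : 1 ≤ η := by omega
  have hηc : η ≤ c := by omega
  have hτb : τ ≤ b.length := by omega
  -- a is a prefix of u
  have haw : a <+: w := by rw [hw]; exact List.prefix_append a b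
  have hau : a <+: u := List.prefix_of_prefix_length_le haw hu (le_of_lt hul)
  obtain ⟨t, hut⟩ := hau
  have htlen : t.length = τ := by
    have : u.length = a.length + t.length := by rw [← hut]; simp
    omega
  have hu2 : u = t.reverse ++ a := by
    conv_lhs => rw [← hupal, ← hut]
    rw [List.reverse_append, ha]
  have hPerU : Per u τ := by
    have := per_of_border hut.symm hu2 (by simp [htlen])
    rwa [htlen] at this
  -- b is a suffix of v
  have hbw : b <:+ w := by rw [hw]; exact List.suffix_append a b
  have hbv : b <:+ v := List.suffix_of_suffix_length_le hbw hv (le_of_lt hvl)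
  obtain ⟨e, hve⟩ := hbv
  have helen : e.length = η := by
    have : v.length = e.length + b.length := by rw [← hve]; simp
    omega
  have hv2 : v = b ++ e.reverse := by
    conv_lhs => rw [← hvpal, ← hve]
    rw [List.reverse_append, hb]
  have hPerV : Per v η := by
    have := per_of_border hv2 hve.symm (by simp [helen])
    simp only [List.length_reverse, helen] at this
    exact this
  -- positions of u and v inside w
  have hu_take : u = w.take m := List.prefix_iff_eq_take.mp hu
  have hv_drop : v = w.drop (n - ν) := by
    have := List.suffix_iff_eq_drop.mp hv
    exact this
  have hcη : n - ν = c - η := by omega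
  -- the window
  set W : List α := (w.drop (c - η)).take (τ + η) with hW_def
  have hWlen : W.length = τ + η := by
    simp only [hW_def, List.length_take, List.length_drop]
    omega
  have hWv : W = v.take (τ + η) := by rw [hv_drop, hcη]
  have hWu : W = u.drop (c - η) := by
    have h9 : m - (c - η) = τ + η := by omega
    rw [hu_take, List.drop_take, h9, ← hW_def]
  have hPerWη : Per W η := by rw [hWv]; exact per_take hPerV _
  have hPerWτ : Per W τ := by rw [hWu]; exact per_drop hPerU _
  set g := Nat.gcd τ η with hg_def
  have hg1 : 1 ≤ g := Nat.gcd_pos_of_pos_left η hτ1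
  have hgτ : g ≤ τ := Nat.le_of_dvd hτ1 (Nat.gcd_dvd_left τ η)
  have hPerWg : Per W g := fine_wilf (τ + η) τ η rfl W hτ1 hη1 (by omega) hPerWτ hPerWη
  have hPerVg : Per v g := by
    apply per_propagate hPerV (m := τ + η) (d := g) (p := η)
    · rwa [← hWv]
    · exact Nat.gcd_dvd_right τ η
    · exact hη1
    · omega
  have hPerBg : Per b g := by
    have := per_drop hPerVg η
    have hdrop : v.drop η = b := by
      rw [← hve]
      have : e.length = η := helen
      rw [← this]
      exact List.drop_left
    rwa [hdrop] at this
  have hPerBτ : Per b τ := per_of_dvd hPerBg (Nat.gcd_dvd_left τ η)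
  -- conclude
  have hr : w.drop m = b.drop τ := by
    rw [hw]
    have h1 : m = a.length + τ := by omega
    rw [h1, ← List.drop_drop, List.drop_left]
  rw [hr]
  have hdt : b.drop τ = b.take (b.length - τ) := per_drop_eq_take hPerBτ
  calc (b.drop τ).reverse = (b.take (b.length - τ)).reverse := by rw [hdt]
    _ = b.reverse.drop (b.length - (b.length - τ)) := List.reverse_take
    _ = b.drop τ := by rw [hb]; congr 1; omega

end PalPair

/-- If a nonempty string `w` is a concatenation of two palindromes, then there exist
palindromes `x`, `y` with `w = xy` such that `x` is the longest palindromic prefix of `w`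
or `y` is the longest palindromic suffix of `w`. -/
theorem stmt_15 {α : Type*} (w a b : List α) (hw : w ≠ [])
    (ha : a.reverse = a) (hb : b.reverse = b) (hab : w = a ++ b) :
    ∃ x y : List α, x.reverse = x ∧ y.reverse = y ∧ w = x ++ y ∧
      ((x <+: w ∧ ∀ x', x' <+: w → x'.reverse = x' → x'.length ≤ x.length) ∨
       (y <:+ w ∧ ∀ y', y' <:+ w → y'.reverse = y' → y'.length ≤ y.length)) := by
  classical
  by_cases hA : ∀ x', x' <+: w → x'.reverse = x' → x'.length ≤ a.length
  · exact ⟨a, b, ha, hb, hab, Or.inl ⟨by rw [hab]; exact List.prefix_append a b, hA⟩⟩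
  push_neg at hA
  obtain ⟨u₀, hu₀w, hu₀pal, hu₀len⟩ := hA
  by_cases hB : ∀ y', y' <:+ w → y'.reverse = y' → y'.length ≤ b.length
  · exact ⟨a, b, ha, hb, hab, Or.inr ⟨by rw [hab]; exact List.suffix_append a b, hB⟩⟩
  push_neg at hB
  obtain ⟨v, hvw, hvpal, hvlen⟩ := hB
  set T : Set ℕ := {k | k ≤ w.length ∧ (w.take k).reverse = w.take k} with hT
  have hu0T : u₀.length ∈ T :=
    ⟨hu₀w.length_le, by rw [← List.prefix_iff_eq_take.mp hu₀w]; exact hu₀pal⟩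
  have hTne : T.Nonempty := ⟨_, hu0T⟩
  have hTbdd : BddAbove T := ⟨w.length, fun k hk => hk.1⟩
  have hPmem := Nat.sSup_mem hTne hTbdd
  set P := sSup T with hP
  have hPa : a.length < P := lt_of_lt_of_le hu₀len (le_csSup hTbdd hu0T)
  have hPn : P ≤ w.length := hPmem.1
  have hupal : (w.take P).reverse = w.take P := hPmem.2
  have hulen : (w.take P).length = P := by simp [hPn]
  have hrpal := PalPair.key hab ha hb (List.take_prefix P w) hupal
    (by rw [hulen]; exact hPa) hvw hvpal hvlen
  rw [hulen] at hrpal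
  refine ⟨w.take P, w.drop P, hupal, hrpal, (List.take_append_drop P w).symm,
    Or.inl ⟨List.take_prefix P w, ?_⟩⟩
  intro x' hx' hx'pal
  rw [hulen]
  exact le_csSup hTbdd ⟨hx'.length_le, by rw [← List.prefix_iff_eq_take.mp hx']; exact hx'pal⟩
end
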